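/- The monotone closure of a 'polynomial' language is FO⁺-definable: for a language of the form L = A₀*·s₀·A₁*·s₁·⋯·s_t·A_{t+1}*, where each s_i ∈ A is a letter and each A_i ⊆ A is a subalphabet, the upward monotone closure L↑ equals the language of words w for which there exist positions x₀ < x₁ < ⋯ < x_t such that s_i ⊆ w[x_i] for each i, and for every position y strictly between x_{i-1} and x_i (with the conventions x_{-1} = −∞, x_{t+1} = +∞), the letter w[y] contains some letter of A_i as a subset. -/

import Mathlib

abbrev Word (σ : Type*) := List (Set σ)

def WLe {σ : Type*} (u v : Word σ) : Prop :=
  u.length = v.length ∧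
    ∀ (i : ℕ) (hu : i < u.length) (hv : i < v.length), u.get ⟨i, hu⟩ ⊆ v.get ⟨i, hv⟩

def UpClos {σ : Type*} (L : Set (Word σ)) : Set (Word σ) := {v | ∃ u ∈ L, WLe u v}

/-- The polynomial language `A₀*·s₀·A₁*·s₁·⋯·s_t·A_{t+1}*`: words obtained as an
interleaving of words over the subalphabets `Asub i` separated by the single
letters `s i`. -/
def PolyLang {σ : Type*} (t : ℕ) (s : Fin (t + 1) → Set σ)
    (Asub : Fin (t + 2) → Set (Set σ)) : Set (Word σ) :=
  {w | ∃ ws : Fin (t + 2) → Word σ,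
    (∀ i : Fin (t + 2), ∀ c ∈ ws i, c ∈ Asub i) ∧
    w = (List.ofFn (fun i : Fin (t + 1) => ws i.castSucc ++ [s i])).flatten
          ++ ws (Fin.last (t + 1))}

section Helpers
variable {σ : Type*}

/-- L1: pointwise split of a `w0 ++ a :: v` decomposition. -/
lemma split_iff (u : Word σ) (a : Set σ) (A : Set (Set σ)) (P : Word σ → Prop) :
    (∃ w0 v : Word σ, u = w0 ++ a :: v ∧ (∀ c ∈ w0, c ∈ A) ∧ P v) ↔
    (∃ n : ℕ, ∃ h : n < u.length, u.get ⟨n, h⟩ = a ∧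
      (∀ y : ℕ, ∀ hy : y < n, u.get ⟨y, hy.trans h⟩ ∈ A) ∧ P (u.drop (n + 1))) := by
  constructor
  · rintro ⟨w0, v, rfl, hA, hP⟩
    refine ⟨w0.length, by simp, ?_, ?_, ?_⟩
    · show (w0 ++ a :: v)[w0.length] = a
      rw [List.getElem_append_right (le_refl _)]
      simp
    · intro y hy
      have : (w0 ++ a :: v).get ⟨y, hy.trans (by simp)⟩ = w0.get ⟨y, hy⟩ := by
        simp [List.getElem_append_left, hy]
      rw [this]; exact hA _ (List.get_mem _ _)
    · have : (w0 ++ a :: v).drop (w0.length + 1) = v := by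
        simp [List.drop_append]
      rwa [this]
  · rintro ⟨n, h, ha, hA, hP⟩
    refine ⟨u.take n, u.drop (n + 1), ?_, ?_, hP⟩
    · rw [← ha]
      conv_lhs => rw [← List.take_append_drop n u]
      congr 1
      exact (List.getElem_cons_drop h).symm
    · intro c hc
      obtain ⟨y, hy, rfl⟩ := List.mem_iff_getElem.1 hc
      have hy' : y < n := by
        have := hy; simp [List.length_take] at this; omega
      have : (u.take n)[y] = u.get ⟨y, hy'.trans h⟩ := by
        simp [List.getElem_take]
      rw [this]; exact hA y hy'

/-- L3: base case unfolding of `PolyLang`. -/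
lemma polyLang_zero (s : Fin 1 → Set σ) (A : Fin 2 → Set (Set σ)) (u : Word σ) :
    u ∈ PolyLang 0 s A ↔
    ∃ w0 v : Word σ, u = w0 ++ s 0 :: v ∧ (∀ c ∈ w0, c ∈ A 0) ∧ (∀ c ∈ v, c ∈ A 1) := by
  constructor
  · rintro ⟨ws, hws, rfl⟩
    refine ⟨ws 0, ws 1, ?_, hws 0, ?_⟩
    · simp [List.ofFn_succ]
      try rfl
    · have : (Fin.last 1 : Fin 2) = 1 := rfl
      exact fun c hc => this ▸ hws (Fin.last 1) c (by simpa [this] using hc)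
  · rintro ⟨w0, v, rfl, h0, h1⟩
    refine ⟨![w0, v], ?_, ?_⟩
    · intro i
      fin_cases i <;> simpa using (by assumption)
    · simp [List.ofFn_succ]

lemma flatten_succ_eq (t : ℕ) (s : Fin (t + 2) → Set σ) (W : Fin (t + 3) → Word σ) :
    (List.ofFn fun i : Fin (t + 2) => W i.castSucc ++ [s i]).flatten ++ W (Fin.last (t + 2)) =
    W 0 ++ s 0 ::
      ((List.ofFn fun i : Fin (t + 1) =>
          (fun k : Fin (t + 2) => W k.succ) i.castSucc ++ [(fun k : Fin (t + 1) => s k.succ) i]).flatten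
        ++ (fun k : Fin (t + 2) => W k.succ) (Fin.last (t + 1))) := by
  rw [List.ofFn_succ]
  simp only [List.flatten_cons, List.append_assoc, List.cons_append, List.nil_append,
    Fin.castSucc_zero]
  congr 2

/-- L2: successor case unfolding of `PolyLang`. -/
lemma polyLang_succ (t : ℕ) (s : Fin (t + 2) → Set σ) (A : Fin (t + 3) → Set (Set σ))
    (u : Word σ) :
    u ∈ PolyLang (t + 1) s A ↔
    ∃ w0 v : Word σ, u = w0 ++ s 0 :: v ∧ (∀ c ∈ w0, c ∈ A 0) ∧
      v ∈ PolyLang t (fun i => s i.succ) (fun i => A i.succ) := by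
  constructor
  · rintro ⟨ws, hws, rfl⟩
    exact ⟨ws 0, _, flatten_succ_eq t s ws, hws 0,
      ⟨fun i => ws i.succ, fun i => hws i.succ, rfl⟩⟩
  · rintro ⟨w0, v, rfl, h0, ws, hws, rfl⟩
    refine ⟨Fin.cases w0 ws, ?_, ?_⟩
    · intro i
      induction i using Fin.cases with
      | zero => simpa using h0
      | succ i => simpa using hws i
    · rw [flatten_succ_eq t s (Fin.cases w0 ws)]
      simp only [Fin.cases_zero, Fin.cases_succ]

end Helpers

section Anchor
variable {σ : Type*}

/-- Anchor characterization predicate (with equality at anchors). -/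
def Anch (t : ℕ) (s : Fin (t + 1) → Set σ) (A : Fin (t + 2) → Set (Set σ)) (u : Word σ) : Prop :=
  ∃ x : Fin (t + 1) → ℕ, StrictMono x ∧
    (∀ i : Fin (t + 1), ∃ h : x i < u.length, u.get ⟨x i, h⟩ = s i) ∧
    (∀ (i : Fin (t + 2)) (y : ℕ) (hy : y < u.length),
      (∀ j : Fin (t + 1), j.succ = i → x j < y) →
      (∀ j : Fin (t + 1), j.castSucc = i → y < x j) →
      u.get ⟨y, hy⟩ ∈ A i)

lemma get_drop' (l : Word σ) (n k : ℕ) (h : k < (l.drop n).length) :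
    (l.drop n).get ⟨k, h⟩ = l.get ⟨n + k, by simp at h; omega⟩ := by
  simp [List.getElem_drop]

lemma get_congr (l : Word σ) (a b : ℕ) (ha : a < l.length) (e : a = b) :
    l.get ⟨a, ha⟩ = l.get ⟨b, e ▸ ha⟩ := by subst e; rfl

lemma anch_zero (s : Fin 1 → Set σ) (A : Fin 2 → Set (Set σ)) (u : Word σ) :
    Anch 0 s A u ↔
    ∃ n : ℕ, ∃ h : n < u.length, u.get ⟨n, h⟩ = s 0 ∧
      (∀ y : ℕ, ∀ hy : y < n, u.get ⟨y, hy.trans h⟩ ∈ A 0) ∧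
      (∀ c ∈ u.drop (n + 1), c ∈ A 1) := by
  constructor
  · rintro ⟨x, hmono, hanch, hgap⟩
    obtain ⟨h0, heq0⟩ := hanch 0
    refine ⟨x 0, h0, heq0, ?_, ?_⟩
    · intro y hy
      exact hgap 0 y _ (fun j hj => absurd hj (Fin.succ_ne_zero j))
        (fun j hj => by have : j = 0 := Fin.eq_zero j; subst this; exact hy)
    · intro c hc
      obtain ⟨k, hk, rfl⟩ := List.mem_iff_getElem.1 hc
      have hk' : x 0 + 1 + k < u.length := by simp at hk; omega
      have : (u.drop (x 0 + 1))[k] = u.get ⟨x 0 + 1 + k, hk'⟩ := get_drop' u (x 0 + 1) k hk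
      rw [this]
      exact hgap 1 _ hk'
        (fun j hj => by have : j = 0 := Fin.eq_zero j; subst this; omega)
        (fun j hj => by
          have : j = 0 := Fin.eq_zero j
          subst this
          exact absurd hj (by decide))
  · rintro ⟨n, h, heq, hpre, hsuf⟩
    refine ⟨fun _ => n, fun a b hab => absurd (Fin.eq_zero a ▸ Fin.eq_zero b ▸ rfl : a = b) hab.ne, ?_, ?_⟩
    · intro i
      have : i = 0 := Fin.eq_zero i
      subst this
      exact ⟨h, heq⟩
    · intro i y hy hlo hhi
      induction i using Fin.cases with
      | zero =>
        have hyn : y < n := hhi 0 rfl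
        exact hpre y hyn
      | succ j =>
        have : j = 0 := Fin.eq_zero j
        subst this
        have hny : n < y := hlo 0 rfl
        have hy2 : y - (n + 1) < (u.drop (n + 1)).length := by simp; omega
        have : u.get ⟨y, hy⟩ = (u.drop (n + 1)).get ⟨y - (n + 1), hy2⟩ := by
          rw [get_drop']
          exact get_congr u y _ hy (by omega)
        rw [this]
        exact hsuf _ (List.get_mem _ _)

end Anchor

section AnchSucc
variable {σ : Type*}

lemma anch_succ (t : ℕ) (s : Fin (t + 2) → Set σ) (A : Fin (t + 3) → Set (Set σ)) (u : Word σ) :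
    Anch (t + 1) s A u ↔
    ∃ n : ℕ, ∃ h : n < u.length, u.get ⟨n, h⟩ = s 0 ∧
      (∀ y : ℕ, ∀ hy : y < n, u.get ⟨y, hy.trans h⟩ ∈ A 0) ∧
      Anch t (fun i => s i.succ) (fun i => A i.succ) (u.drop (n + 1)) := by
  constructor
  · rintro ⟨x, hmono, hanch, hgap⟩
    obtain ⟨h0, heq0⟩ := hanch 0
    have hxs : ∀ j : Fin (t + 1), x 0 + 1 ≤ x j.succ := fun j => hmono (Fin.succ_pos j)
    refine ⟨x 0, h0, heq0, ?_, ?_⟩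
    · intro y hy
      exact hgap 0 y _ (fun j hj => absurd hj (Fin.succ_ne_zero j))
        (fun j hj => by
          have hj0 : j = 0 := by
            have := Fin.castSucc_injective _ (a₁ := j) (a₂ := 0)
            simpa using hj
          subst hj0; exact hy)
    · refine ⟨fun j => x j.succ - (x 0 + 1), ?_, ?_, ?_⟩
      · intro a b hab
        have h1 := hmono (show a.succ < b.succ from Fin.succ_lt_succ_iff.2 hab)
        have h2 := hxs a
        have h3 := hxs b
        beta_reduce
        omega
      · intro j
        obtain ⟨hj, heqj⟩ := hanch j.succ
        have h1 : x j.succ - (x 0 + 1) < (u.drop (x 0 + 1)).length := by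
          have := hxs j; simp; omega
        refine ⟨h1, ?_⟩
        rw [get_drop', get_congr _ _ (x j.succ) _ (by have := hxs j; beta_reduce; omega)]
        exact heqj
      · intro i' y' hy' hlo' hhi'
        have hy2 : y' < (u.drop (x 0 + 1)).length := hy'
        have hy'' : x 0 + 1 + y' < u.length := by simp at hy2; omega
        have key := hgap i'.succ (x 0 + 1 + y') hy'' ?_ ?_
        · rw [get_drop']
          exact key
        · intro j hj
          induction j using Fin.cases with
          | zero => omega
          | succ j'' =>
            have e : j''.succ = i' := Fin.succ_injective _ hj
            have h5 := hlo' j'' e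
            beta_reduce at h5
            have := hxs j''
            omega
        · intro j hj
          induction j using Fin.cases with
          | zero => exact absurd hj.symm (Fin.succ_ne_zero i')
          | succ j'' =>
            rw [← Fin.succ_castSucc] at hj
            have e : j''.castSucc = i' := Fin.succ_injective _ hj
            have h5 := hhi' j'' e
            beta_reduce at h5
            have := hxs j''
            omega
  · rintro ⟨n, h, heq, hpre, x', hmono', hanch', hgap'⟩
    refine ⟨Fin.cases n (fun j => n + 1 + x' j), ?_, ?_, ?_⟩
    · intro a b hab
      induction b using Fin.cases with
      | zero => exact absurd hab (by simp)
      | succ b' =>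
        induction a using Fin.cases with
        | zero => simp only [Fin.cases_zero, Fin.cases_succ]; omega
        | succ a' =>
          simp only [Fin.cases_succ]
          have := hmono' (Fin.succ_lt_succ_iff.1 hab)
          omega
    · intro i
      induction i using Fin.cases with
      | zero => exact ⟨h, heq⟩
      | succ j =>
        obtain ⟨hj, heqj⟩ := hanch' j
        have hj2 : x' j < u.length - (n + 1) := by simpa using hj
        simp only [Fin.cases_succ]
        refine ⟨by omega, ?_⟩
        rw [← get_drop' u (n + 1) (x' j) (by simpa using hj)]
        exact heqj
    · intro i y hy hlo hhi
      induction i using Fin.cases with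
      | zero =>
        have hyn : y < n := by
          have := hhi 0 rfl
          simpa using this
        exact hpre y hyn
      | succ i' =>
        have hn : n < y := by
          rcases Fin.eq_zero_or_eq_succ i' with rfl | ⟨k, rfl⟩
          · have := hlo 0 rfl
            simpa using this
          · have := hlo k.succ rfl
            simp only [Fin.cases_succ] at this
            omega
        have hy' : y - (n + 1) < (u.drop (n + 1)).length := by simp; omega
        have key := hgap' i' (y - (n + 1)) hy' ?_ ?_
        · rw [get_drop', get_congr _ _ y _ (by omega)] at key
          exact key
        · intro j'' hj''
          have := hlo j''.succ (congrArg Fin.succ hj'')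
          simp only [Fin.cases_succ] at this
          omega
        · intro j'' hj''
          have := hhi j''.succ (by rw [← Fin.succ_castSucc, hj''])
          simp only [Fin.cases_succ] at this
          omega

end AnchSucc

lemma polyLang_iff_anch {σ : Type*} :
    ∀ (t : ℕ) (s : Fin (t + 1) → Set σ) (A : Fin (t + 2) → Set (Set σ)) (u : Word σ),
      u ∈ PolyLang t s A ↔ Anch t s A u := by
  intro t
  induction t with
  | zero =>
    intro s A u
    rw [polyLang_zero, split_iff u (s 0) (A 0) (fun v => ∀ c ∈ v, c ∈ A 1), anch_zero]
  | succ t ih =>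
    intro s A u
    rw [polyLang_succ,
      split_iff u (s 0) (A 0) (fun v => v ∈ PolyLang t (fun i => s i.succ) (fun i => A i.succ)),
      anch_succ]
    constructor <;> rintro ⟨n, h, e, p, q⟩ 
    · exact ⟨n, h, e, p, (ih _ _ _).1 q⟩
    · exact ⟨n, h, e, p, (ih _ _ _).2 q⟩

lemma count_key {n : ℕ} (x : Fin (n + 1) → ℕ) (hmono : StrictMono x) (y : ℕ)
    (j : Fin (n + 1)) :
    x j < y ↔ (j : ℕ) < (Finset.univ.filter (fun k : Fin (n + 1) => x k < y)).card := by
  classical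
  constructor
  · intro h
    have hsub : Finset.Iic j ⊆ Finset.univ.filter (fun k : Fin (n + 1) => x k < y) := by
      intro k hk
      simp only [Finset.mem_filter, Finset.mem_univ, true_and]
      exact lt_of_le_of_lt (hmono.monotone (Finset.mem_Iic.1 hk)) h
    have hc := Finset.card_le_card hsub
    rw [Fin.card_Iic] at hc
    omega
  · intro h
    by_contra hx
    have hsub : Finset.univ.filter (fun k : Fin (n + 1) => x k < y) ⊆ Finset.Iio j := by
      intro k hk
      simp only [Finset.mem_filter, Finset.mem_univ, true_and] at hk
      simp only [Finset.mem_Iio]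
      by_contra hk2
      push_neg at hk2
      exact hx (lt_of_le_of_lt (hmono.monotone hk2) hk)
    have hc := Finset.card_le_card hsub
    rw [Fin.card_Iio] at hc
    omega


/-- The upward monotone closure of a polynomial language is exactly the set of
words admitting anchor positions `x₀ < ⋯ < x_t` with `s i ⊆ w[x i]`, such that
every position strictly between consecutive anchors (with the conventions
`x₋₁ = −∞`, `x_{t+1} = +∞`) carries a letter containing some letter of the
corresponding subalphabet as a subset. -/
theorem stmt_15 (σ : Type*) [Fintype σ] (t : ℕ) (s : Fin (t + 1) → Set σ)
    (Asub : Fin (t + 2) → Set (Set σ)) (w : Word σ) :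
    w ∈ UpClos (PolyLang t s Asub) ↔
      ∃ x : Fin (t + 1) → ℕ, StrictMono x ∧
        (∀ i : Fin (t + 1), ∃ h : x i < w.length, s i ⊆ w.get ⟨x i, h⟩) ∧
        (∀ (i : Fin (t + 2)) (y : ℕ) (hy : y < w.length),
          (∀ j : Fin (t + 1), j.succ = i → x j < y) →
          (∀ j : Fin (t + 1), j.castSucc = i → y < x j) →
          ∃ b ∈ Asub i, b ⊆ w.get ⟨y, hy⟩) := by
  classical
  constructor
  · rintro ⟨u, hu, hlen, hle⟩
    obtain ⟨x, hmono, hanch, hgap⟩ := (polyLang_iff_anch t s Asub u).1 hu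
    refine ⟨x, hmono, ?_, ?_⟩
    · intro i
      obtain ⟨h, heq⟩ := hanch i
      have h' : x i < w.length := by omega
      exact ⟨h', heq ▸ hle (x i) h h'⟩
    · intro i y hy hlo hhi
      have hy' : y < u.length := by omega
      exact ⟨u.get ⟨y, hy'⟩, hgap i y hy' hlo hhi, hle y hy' hy⟩
  · rintro ⟨x, hmono, hanch, hgap⟩
    set m : ℕ → ℕ := fun y => (Finset.univ.filter (fun k : Fin (t + 1) => x k < y)).card
      with hm
    have key : ∀ (y : ℕ) (j : Fin (t + 1)), x j < y ↔ (j : ℕ) < m y :=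
      fun y j => count_key x hmono y j
    have hmle : ∀ y, m y ≤ t + 1 := by
      intro y
      have := Finset.card_filter_le (Finset.univ : Finset (Fin (t + 1)))
        (fun k : Fin (t + 1) => x k < y)
      simpa using this
    have gapc : ∀ (y : ℕ) (hy : y < w.length), (¬ ∃ i : Fin (t + 1), x i = y) →
        ∃ b ∈ Asub ⟨m y, Nat.lt_succ_of_le (hmle y)⟩, b ⊆ w.get ⟨y, hy⟩ := by
      intro y hy hno
      refine hgap ⟨m y, Nat.lt_succ_of_le (hmle y)⟩ y hy ?_ ?_
      · intro j hj
        have hv : (j : ℕ) + 1 = m y := by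
          have := congrArg Fin.val hj
          simpa using this
        exact (key y j).2 (by omega)
      · intro j hj
        have hv : (j : ℕ) = m y := by
          have := congrArg Fin.val hj
          simpa using this
        have h1 : ¬ x j < y := fun hlt => by have := (key y j).1 hlt; omega
        have h2 : x j ≠ y := fun e => hno ⟨j, e⟩
        omega
    set u : Word σ := List.ofFn (fun k : Fin w.length =>
      if h : ∃ i : Fin (t + 1), x i = (k : ℕ) then s h.choose
      else (gapc (k : ℕ) k.2 h).choose) with hudef
    have hulen : u.length = w.length := by simp [hudef]
    have huget : ∀ (k : ℕ) (hk : k < w.length) (hku : k < u.length),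
        u.get ⟨k, hku⟩ =
          (if h : ∃ i : Fin (t + 1), x i = k then s h.choose
           else (gapc k hk h).choose) := by
      intro k hk hku
      simp only [hudef, List.get_eq_getElem, List.getElem_ofFn]
    refine ⟨u, (polyLang_iff_anch t s Asub u).2 ?_, hulen, ?_⟩
    · refine ⟨x, hmono, ?_, ?_⟩
      · intro i
        obtain ⟨hiw, _⟩ := hanch i
        have hiu : x i < u.length := by omega
        refine ⟨hiu, ?_⟩
        rw [huget (x i) hiw hiu, dif_pos ⟨i, rfl⟩]
        exact congrArg s
          (hmono.injective (⟨i, rfl⟩ : ∃ i' : Fin (t + 1), x i' = x i).choose_spec)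
      · intro i y hy hlo hhi
        have hyw : y < w.length := by omega
        have ha : ∀ j : Fin (t + 1), (j : ℕ) < (i : ℕ) → x j < y := by
          intro j hj
          have hlt : (i : ℕ) - 1 < t + 1 := by omega
          have he : (⟨(i : ℕ) - 1, hlt⟩ : Fin (t + 1)).succ = i := by
            apply Fin.ext
            simp only [Fin.val_succ]
            omega
          have h1 := hlo ⟨(i : ℕ) - 1, hlt⟩ he
          have h2 : x j ≤ x ⟨(i : ℕ) - 1, hlt⟩ := hmono.monotone (by
            rw [Fin.le_def]
            simp only
            omega)
          omega
        have hb : ∀ j : Fin (t + 1), (i : ℕ) ≤ (j : ℕ) → y < x j := by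
          intro j hj
          have hlt : (i : ℕ) < t + 1 := by omega
          have he : (⟨(i : ℕ), hlt⟩ : Fin (t + 1)).castSucc = i := by
            apply Fin.ext
            simp
          have h1 := hhi ⟨(i : ℕ), hlt⟩ he
          have h2 : x ⟨(i : ℕ), hlt⟩ ≤ x j := hmono.monotone (by
            rw [Fin.le_def]
            simpa using hj)
          omega
        have hno : ¬ ∃ j : Fin (t + 1), x j = y := by
          rintro ⟨j, rfl⟩
          rcases Nat.lt_or_ge (j : ℕ) (i : ℕ) with hc | hc
          · exact lt_irrefl _ (ha j hc)
          · exact lt_irrefl _ (hb j hc)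
        have hmy : m y = (i : ℕ) := by
          by_contra hne
          rcases Nat.lt_or_ge (m y) (i : ℕ) with hc | hc
          · have h1 := (key y ⟨m y, by omega⟩).1 (ha ⟨m y, by omega⟩ (by simpa using hc))
            simp at h1
          · have hlt2 : (i : ℕ) < m y := by omega
            have hit : (i : ℕ) < t + 1 := by have := hmle y; omega
            have h1 := (key y ⟨(i : ℕ), hit⟩).2 (by simpa using hlt2)
            have h2 := hb ⟨(i : ℕ), hit⟩ (by simp)
            omega
        rw [huget y hyw hy, dif_neg hno]
        have hieq : (⟨m y, Nat.lt_succ_of_le (hmle y)⟩ : Fin (t + 2)) = i :=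
          Fin.ext (by simpa using hmy)
        have hspec := ((gapc y hyw hno).choose_spec).1
        exact congrArg Asub hieq ▸ hspec
    · intro k hku hkw
      rw [huget k hkw hku]
      split_ifs with h
      · obtain ⟨hc, hsub⟩ := hanch h.choose
        have e : x h.choose = k := h.choose_spec
        intro a ha
        have := hsub ha
        rwa [get_congr w _ k hc e] at this
      · exact ((gapc k hkw h).choose_spec).2
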